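/- Let H be a commutative bialgebra and A a commutative right H-comodule algebra. For an invertible grouplike element X of A⊗H, the relative Hopf module A^X (A with the coaction ρ_X(a) = Xa) is trivial in Pic^H(A), i.e. A^X ≅ A as relative Hopf modules, if and only if X = d(a) = a^{-1}a_{[0]}⊗a_{[1]} for some invertible a ∈ A. -/
import Mathlib


open TensorProduct

universe u

/-- A commutative right `H`-comodule algebra: a commutative `k`-algebra `A` together with
a coassociative counital coaction `ρ : A → A ⊗ H` which is an algebra map. -/
structure ComodAlg (k H A : Type u) [CommRing k] [Ring H] [Bialgebra k H]
    [CommRing A] [Algebra k A] : Type u where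
  ρ : A →ₐ[k] A ⊗[k] H
  counit_comp : ∀ a : A,
    (TensorProduct.rid k A) ((LinearMap.lTensor A (Coalgebra.counit (R := k) (A := H))) (ρ a)) = a
  coassoc : ∀ a : A,
    (LinearMap.lTensor A (Coalgebra.comul (R := k) (A := H))) (ρ a)
      = (TensorProduct.assoc k A H H) ((LinearMap.rTensor H ρ.toLinearMap) (ρ a))

namespace ComodAlg

variable {k H A : Type u} [CommRing k] [Ring H] [Bialgebra k H]
  [CommRing A] [Algebra k A] (c : ComodAlg k H A)

/-- The subset of coinvariant elements `B = A^{co H}`. -/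
def coinvSet : Set A := {a : A | c.ρ a = a ⊗ₜ[k] 1}

/-- The coinvariants `B = A^{co H}` as a subalgebra of `A`. -/
def coinvAlg : Subalgebra k A where
  carrier := c.coinvSet
  mul_mem' {a} {b} ha hb := by
    simp only [coinvSet, Set.mem_setOf_eq] at *
    rw [map_mul, ha, hb, Algebra.TensorProduct.tmul_mul_tmul, mul_one]
  add_mem' {a} {b} ha hb := by
    simp only [coinvSet, Set.mem_setOf_eq] at *
    rw [map_add, ha, hb, ← add_tmul]
  algebraMap_mem' r := by
    simp only [coinvSet, Set.mem_setOf_eq, AlgHom.commutes,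
      Algebra.TensorProduct.algebraMap_apply]

end ComodAlg

namespace ComodAlg

variable {k H A : Type u} [CommRing k] [CommRing H] [Bialgebra k H]
  [CommRing A] [Algebra k A] (c : ComodAlg k H A)

/-- `Σ aᵢ ⊗ (hᵢ)₍₁₎ ⊗ (hᵢ)₍₂₎`, the comultiplication of the coring `A ⊗ H` applied to `x`,
written in `(A ⊗ H) ⊗ H` via the canonical identification `(A ⊗ H) ⊗_A (A ⊗ H) ≅ A ⊗ H ⊗ H`. -/
noncomputable def coact2 : A ⊗[k] H →ₗ[k] (A ⊗[k] H) ⊗[k] H :=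
  (TensorProduct.assoc k A H H).symm.toLinearMap ∘ₗ
    LinearMap.lTensor A (Coalgebra.comul (R := k) (A := H))

/-- `Σ_{i,j} aᵢ (a_j)₍₀₎ ⊗ hᵢ (a_j)₍₁₎ ⊗ h_j`, the image of `x ⊗_A x` under the canonical
identification `(A ⊗ H) ⊗_A (A ⊗ H) ≅ A ⊗ H ⊗ H`. -/
noncomputable def sqRHS (x : A ⊗[k] H) : (A ⊗[k] H) ⊗[k] H :=
  (LinearMap.rTensor H (LinearMap.mulLeft k x)) ((LinearMap.rTensor H c.ρ.toLinearMap) x)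

/-- `x` is a grouplike element of the `A`-coring `A ⊗ H`; equivalently, `x` is a
normalized Harrison 1-cocycle. -/
noncomputable def IsGrouplike (x : A ⊗[k] H) : Prop :=
  coact2 x = c.sqRHS x ∧
    (TensorProduct.rid k A) ((LinearMap.lTensor A (Coalgebra.counit (R := k) (A := H))) x) = 1

/-- The map `d : 𝔾ₘ(A) → Gⁱ(A ⊗ H)`, `d(a) = a⁻¹ a₍₀₎ ⊗ a₍₁₎`. -/
noncomputable def d (a : Aˣ) : A ⊗[k] H := (((↑a⁻¹ : A) ⊗ₜ[k] (1 : H)) : A ⊗[k] H) * c.ρ ↑a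

end ComodAlg

/-- for an invertible grouplike element `X` of `A ⊗ H`, the relative Hopf
module `A^X` (that is, `A` with coaction `ρ_X(a) = X ρ(a)`) is isomorphic to `A` (with
coaction `ρ`) in the category of relative Hopf modules iff `X = d(a) = a⁻¹a₍₀₎ ⊗ a₍₁₎`
for some unit `a` of `A`. An isomorphism of relative Hopf modules is an `A`-linear
bijection `f` which is colinear: `ρ ∘ f = (f ⊗ id_H) ∘ ρ_X`. -/

private lemma rTensor_mul_eq {k H A : Type u} [CommRing k] [CommRing H] [Bialgebra k H]
    [CommRing A] [Algebra k A] (f : A →ₗ[k] A) (u : A) (hf : ∀ b, f b = u * b)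
    (x : A ⊗[k] H) :
    (LinearMap.rTensor H f) x = ((u ⊗ₜ[k] (1 : H)) : A ⊗[k] H) * x := by
  induction x using TensorProduct.induction_on with
  | zero => simp
  | tmul b h => simp [hf, Algebra.TensorProduct.tmul_mul_tmul]
  | add y z hy hz => simp [map_add, hy, hz, mul_add]

theorem AX_trivial_iff_in_image_of_d
    {k H A : Type u} [CommRing k] [CommRing H] [Bialgebra k H]
    [CommRing A] [Algebra k A] (c : ComodAlg k H A) (X : (A ⊗[k] H)ˣ)
    (hX : c.IsGrouplike ↑X) :
    (∃ f : A ≃ₗ[A] A, ∀ a : A,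
        c.ρ (f a) =
          (LinearMap.rTensor H ((f : A →ₗ[A] A).restrictScalars k)) ((↑X : A ⊗[k] H) * c.ρ a))
      ↔ ∃ a : Aˣ, (↑X : A ⊗[k] H) = c.d a := by
  constructor
  · rintro ⟨f, hf⟩
    have hlin : ∀ b : A, ((f : A →ₗ[A] A).restrictScalars k) b = (f 1) * b := by
      intro b
      have : f (b • (1 : A)) = b • f 1 := f.map_smul b 1
      simpa [smul_eq_mul, mul_comm] using this
    have hinv : f 1 * f.symm 1 = 1 := by
      have : f ((f.symm 1) • (1 : A)) = (f.symm 1) • f 1 := f.map_smul _ 1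
      simpa [smul_eq_mul, mul_comm] using this.symm
    refine ⟨⟨f 1, f.symm 1, hinv, by rw [mul_comm]; exact hinv⟩, ?_⟩
    have h1 := hf 1
    rw [rTensor_mul_eq _ (f 1) hlin] at h1
    simp only [map_one, mul_one] at h1
    show (↑X : A ⊗[k] H) = ((f.symm 1) ⊗ₜ[k] (1 : H)) * c.ρ (f 1)
    rw [h1, ← mul_assoc, Algebra.TensorProduct.tmul_mul_tmul, mul_comm (f.symm 1) (f 1),
      hinv, mul_one, ← Algebra.TensorProduct.one_def, one_mul]
  · rintro ⟨a, ha⟩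
    refine ⟨LinearEquiv.smulOfUnit a, ?_⟩
    intro b
    have hlin : ∀ x : A, (((LinearEquiv.smulOfUnit a : A ≃ₗ[A] A) :
        A →ₗ[A] A).restrictScalars k) x = (↑a : A) * x := by
      intro x; simp [LinearEquiv.smulOfUnit, Units.smul_def, smul_eq_mul]
    rw [rTensor_mul_eq _ (↑a : A) hlin, ha]
    show c.ρ ((a : A) • b) = _
    rw [ComodAlg.d, ← mul_assoc, ← mul_assoc, Algebra.TensorProduct.tmul_mul_tmul,
      Units.mul_inv, mul_one, ← Algebra.TensorProduct.one_def, one_mul]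
    simp [smul_eq_mul, map_mul]
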